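/- There exists an InqLTL(~) formula over AP = {ν, #} whose unique model is the team of all ν-traces: there is an InqLTL(~) formula φ such that for every team L over AP = {ν, #}, L ⊨ φ if and only if L equals the set of all traces w such that ν ∈ w(i) for every i ∈ ℕ and there is exactly one i ∈ ℕ with # ∈ w(i). -/

import Mathlib

/-- A trace over the set `AP` of atomic propositions. -/
abbrev Trace (AP : Type) := ℕ → Set AP

/-- A team: a set of traces. -/
abbrev Team (AP : Type) := Set (Trace AP)

/-- The suffix `w≥i` of a trace. -/
def Trace.shift {AP : Type} (w : Trace AP) (i : ℕ) : Trace AP := fun j => w (i + j)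

/-- The suffix team `L≥i`. -/
def Team.shift {AP : Type} (L : Team AP) (i : ℕ) : Team AP := (fun w => Trace.shift w i) '' L

/-- InqLTL(~) formulas over `AP`: InqLTL extended with Boolean negation `~`. -/
inductive InqFormN (AP : Type) : Type where
  | bot
  | atom (p : AP)
  | or (φ ψ : InqFormN AP)
  | and (φ ψ : InqFormN AP)
  | imp (φ ψ : InqFormN AP)
  | bneg (φ : InqFormN AP)
  | next (φ : InqFormN AP)
  | untl (φ ψ : InqFormN AP)
  | rel (φ ψ : InqFormN AP)

/-- Team satisfaction for InqLTL(~). -/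
def InqFormN.sat {AP : Type} : InqFormN AP → Team AP → Prop
  | .bot, L => L = ∅
  | .atom p, L => ∀ w ∈ L, p ∈ w 0
  | .or φ ψ, L => φ.sat L ∨ ψ.sat L
  | .and φ ψ, L => φ.sat L ∧ ψ.sat L
  | .imp φ ψ, L => ∀ L' ⊆ L, φ.sat L' → ψ.sat L'
  | .bneg φ, L => ¬ φ.sat L
  | .next φ, L => φ.sat (L.shift 1)
  | .untl φ ψ, L => ∃ i, ψ.sat (L.shift i) ∧ ∀ k < i, φ.sat (L.shift k)
  | .rel φ ψ, L => ∀ i, ψ.sat (L.shift i) ∨ ∃ k < i, φ.sat (L.shift k)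

/-- The set `AP = {ν, #}` of atomic propositions. -/
inductive AP2 : Type where
  | nu
  | hash
deriving DecidableEq

instance : Fintype AP2 := ⟨{AP2.nu, AP2.hash}, fun x => by cases x <;> simp⟩

/-- A ν-trace: ν holds at every position and # holds at exactly one position. -/
def IsNuTrace (w : Trace AP2) : Prop :=
  (∀ i, AP2.nu ∈ w i) ∧ ∃! i, AP2.hash ∈ w i

namespace InqAux

/-- Intuitionistic negation. -/
def N (φ : InqFormN AP2) : InqFormN AP2 := .imp φ .bot
/-- Globally. -/
def G (φ : InqFormN AP2) : InqFormN AP2 := .rel .bot φ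

lemma team_shift_empty (i : ℕ) : (∅ : Team AP2).shift i = ∅ := Set.image_empty _

lemma team_shift_ne {L : Team AP2} (hL : L ≠ ∅) (i : ℕ) : L.shift i ≠ ∅ := by
  simp [Team.shift, Set.image_eq_empty, hL]

lemma N_atom_sat (p : AP2) (L : Team AP2) :
    (N (.atom p)).sat L ↔ ∀ w ∈ L, p ∉ w 0 := by
  simp only [N, InqFormN.sat]
  constructor
  · intro h w hw hp
    have := h {w} (Set.singleton_subset_iff.mpr hw)
      (by intro v hv; rw [Set.mem_singleton_iff] at hv; subst hv; exact hp)
    simp at this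
  · intro h L' hsub hall
    ext v
    simp only [Set.mem_empty_iff_false, iff_false]
    intro hv
    exact h v (hsub hv) (hall v hv)

lemma G_sat {L : Team AP2} (hL : L ≠ ∅) (ψ : InqFormN AP2) :
    (G ψ).sat L ↔ ∀ i, ψ.sat (L.shift i) := by
  constructor
  · intro h i
    rcases h i with h' | ⟨k, _, hk⟩
    · exact h'
    · exact absurd hk (team_shift_ne hL k)
  · intro h i
    exact Or.inl (h i)

lemma GNhash_sat {L : Team AP2} (hL : L ≠ ∅) :
    (G (N (.atom .hash))).sat L ↔ ∀ w ∈ L, ∀ i, AP2.hash ∉ w i := by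
  rw [G_sat hL]
  constructor
  · intro h w hw i
    have := (N_atom_sat _ _).mp (h i) (Trace.shift w i) ⟨w, hw, rfl⟩
    simpa [Trace.shift] using this
  · intro h i
    rw [N_atom_sat]
    rintro v ⟨w, hw, rfl⟩ hp
    exact h w hw i (by simpa [Trace.shift] using hp)

lemma beta_sat (L : Team AP2) :
    ((InqFormN.next (G (N (.atom .hash)))) : InqFormN AP2).sat L ↔
      ∀ w ∈ L, ∀ j, AP2.hash ∉ w (1 + j) := by
  show (G (N (.atom .hash))).sat (L.shift 1) ↔ _
  by_cases hL : L = ∅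
  · subst hL
    rw [team_shift_empty]
    refine iff_of_true ?_ (by simp)
    intro i
    left
    rw [team_shift_empty, N_atom_sat]
    simp
  · rw [GNhash_sat (team_shift_ne hL 1)]
    constructor
    · intro h w hw j
      exact h (Trace.shift w 1) ⟨w, hw, rfl⟩ j
    · rintro h v ⟨w, hw, rfl⟩ j
      exact h w hw j

lemma imp_flat {α β : InqFormN AP2} {P Q : Trace AP2 → Prop}
    (hα : ∀ L, α.sat L ↔ ∀ w ∈ L, P w) (hβ : ∀ L, β.sat L ↔ ∀ w ∈ L, Q w)
    (L : Team AP2) :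
    (α.imp β).sat L ↔ ∀ w ∈ L, P w → Q w := by
  show (∀ L' ⊆ L, α.sat L' → β.sat L') ↔ _
  constructor
  · intro h w hw hp
    refine (hβ _).mp (h {w} (Set.singleton_subset_iff.mpr hw) ((hα _).mpr ?_)) w rfl
    intro v hv; rw [Set.mem_singleton_iff] at hv; subst hv; exact hp
  · intro h L' hsub hα'
    exact (hβ _).mpr fun w hw => h w (hsub hw) ((hα _).mp hα' w hw)

lemma atom_sat (p : AP2) (L : Team AP2) : (InqFormN.atom p).sat L ↔ ∀ w ∈ L, p ∈ w 0 :=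
  Iff.rfl

/-- the ν-trace with # at position `i` -/
def nt (i : ℕ) : Trace AP2 := fun j => if j = i then Set.univ else {AP2.nu}

lemma nt_isNuTrace (i : ℕ) : IsNuTrace (nt i) := by
  constructor
  · intro j
    by_cases h : j = i <;> simp [nt, h]
  · refine ⟨i, by simp [nt], ?_⟩
    intro j hj
    by_contra h
    simp [nt, h] at hj

end InqAux

open InqAux

/-- there is an InqLTL(~) formula over `AP = {ν, #}` whose unique
model is the team of all ν-traces. -/
theorem inqLTLN_unique_model_all_nu_traces :
    ∃ φ : InqFormN AP2,
      ∀ L : Team AP2, φ.sat L ↔ L = {w : Trace AP2 | IsNuTrace w} := by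
  classical
  refine ⟨((G (.atom .nu)).and
            (G ((InqFormN.atom .hash).imp (.next (G (N (.atom .hash))))))).and
          ((G (.bneg (N (.atom .hash)))).and ((G (N (.atom .hash))).imp .bot)), ?_⟩
  intro L
  constructor
  · rintro ⟨⟨h1, h2⟩, h3, h4⟩
    have hL : L ≠ ∅ := by
      intro h; subst h
      simp only [G, InqFormN.sat] at h3
      rcases h3 0 with h' | ⟨k, hk, _⟩
      · exact h' ((N_atom_sat _ _).mpr (by rw [team_shift_empty]; simp))
      · omega
    -- every trace in L has nu everywhere
    have hnu : ∀ w ∈ L, ∀ i, AP2.nu ∈ w i := by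
      intro w hw i
      have := (G_sat hL _).mp h1 i
      have := this (Trace.shift w i) ⟨w, hw, rfl⟩
      simpa [Trace.shift] using this
    -- at most one hash
    have hmax : ∀ w ∈ L, ∀ i j, AP2.hash ∈ w i → AP2.hash ∈ w j → i = j := by
      have key : ∀ w ∈ L, ∀ i, AP2.hash ∈ w i → ∀ j, AP2.hash ∉ w (i + (1 + j)) := by
        intro w hw i hi j
        have := (G_sat hL _).mp h2 i
        rw [imp_flat (atom_sat .hash) beta_sat] at this
        have := this (Trace.shift w i) ⟨w, hw, rfl⟩ (by simpa [Trace.shift] using hi) j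
        simpa [Trace.shift] using this
      intro w hw i j hi hj
      by_contra hne
      rcases Nat.lt_or_ge i j with h | h
      · exact key w hw i hi (j - i - 1) (by
          have : i + (1 + (j - i - 1)) = j := by omega
          rwa [this])
      · have h' : j < i := by omega
        exact key w hw j hj (i - j - 1) (by
          have : j + (1 + (i - j - 1)) = i := by omega
          rwa [this])
    -- at least one hash
    have hex : ∀ w ∈ L, ∃ i, AP2.hash ∈ w i := by
      intro w hw
      by_contra hno
      push_neg at hno
      have hne : ({w} : Team AP2) ≠ ∅ := by simp
      have : ({w} : Team AP2) = ∅ := by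
        refine h4 {w} (Set.singleton_subset_iff.mpr hw) ?_
        rw [GNhash_sat hne]
        intro v hv i
        rw [Set.mem_singleton_iff] at hv; subst hv
        exact hno i
      simp at this
    -- each position's hash trace exists
    have hall : ∀ i, ∃ w ∈ L, AP2.hash ∈ w i := by
      intro i
      have hb : ¬ (N (.atom .hash)).sat (L.shift i) := (G_sat hL _).mp h3 i
      rw [N_atom_sat] at hb
      push_neg at hb
      obtain ⟨v, hv, hhash⟩ := hb
      obtain ⟨w, hw, rfl⟩ := hv
      exact ⟨w, hw, by simpa [Trace.shift] using hhash⟩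
    ext t
    simp only [Set.mem_setOf_eq]
    constructor
    · intro ht
      obtain ⟨i, hi⟩ := hex t ht
      exact ⟨hnu t ht, i, hi, fun j hj => hmax t ht j i hj hi⟩
    · rintro ⟨htnu, i, hi, huniq⟩
      obtain ⟨w, hw, hwi⟩ := hall i
      have : w = t := by
        funext j
        ext a
        cases a with
        | nu => simp only [hnu w hw j, htnu j]
        | hash =>
          constructor
          · intro h
            have : j = i := hmax w hw j i h hwi
            subst this; exact hi
          · intro h
            have : j = i := huniq j h
            subst this; exact hwi
      rwa [this] at hw
  · rintro rfl
    have hS : ({w : Trace AP2 | IsNuTrace w} : Team AP2) ≠ ∅ :=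
      Set.nonempty_iff_ne_empty.mp ⟨nt 0, nt_isNuTrace 0⟩
    refine ⟨⟨?_, ?_⟩, ?_, ?_⟩
    · rw [G_sat hS]
      rintro i v ⟨w, hw, rfl⟩
      exact hw.1 (i + 0)
    · rw [G_sat hS]
      intro i
      rw [imp_flat (atom_sat .hash) beta_sat]
      rintro v ⟨w, hw, rfl⟩ h0 j hj
      obtain ⟨_, k, hk, huniq⟩ := hw
      have e1 : i + 0 = k := huniq _ h0
      have e2 : i + (1 + j) = k := huniq _ hj
      omega
    · rw [G_sat hS]
      intro i
      show ¬ (N (.atom .hash)).sat _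
      rw [N_atom_sat]
      push_neg
      refine ⟨Trace.shift (nt i) i, ⟨nt i, nt_isNuTrace i, rfl⟩, ?_⟩
      show AP2.hash ∈ nt i (i + 0)
      simp [nt]
    · intro L' hsub h'
      by_contra hne
      obtain ⟨w, hw⟩ := Set.nonempty_iff_ne_empty.mpr hne
      have := (GNhash_sat hne).mp h' w hw
      obtain ⟨_, k, hk, _⟩ := hsub hw
      exact this k hk
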